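/- In the twisted deformative Schrödinger–Virasoro algebra 𝓛 with μ = 0 and λ = -2, the linear map D₋₂ defined by D₋₂(Lₙ) = n³·Mₙ, D₋₂(Yₙ) = D₋₂(Mₙ) = 0 is a derivation of 𝓛, and it is an outer derivation (not of the form ad(z) for any z ∈ 𝓛). -/

import Mathlib

/-- Right bracket multiplication as a linear map. -/
def rbracket (R : Type*) [CommRing R] (A : Type*) [LieRing A] [LieAlgebra R A] (a : A) :
    A →ₗ[R] A where
  toFun x := ⁅x, a⁆
  map_add' u v := add_lie u v a
  map_smul' c u := smul_lie c u a

@[simp] lemma rbracket_apply (R : Type*) [CommRing R] (A : Type*) [LieRing A] [LieAlgebra R A]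
    (a x : A) : rbracket R A a x = ⁅x, a⁆ := rfl

theorem stmt_13 (𝓛 : Type*) [LieRing 𝓛] [LieAlgebra ℂ 𝓛]
    (L Y M : ℤ → 𝓛)
    (hspan : Submodule.span ℂ (Set.range L ∪ Set.range Y ∪ Set.range M) = ⊤)
    (hind : LinearIndependent ℂ (fun p : ℤ × Fin 3 =>
      if p.2 = 0 then L p.1 else if p.2 = 1 then Y p.1 else M p.1))
    (hLL : ∀ n m : ℤ, ⁅L n, L m⁆ = ((m : ℂ) - (n : ℂ)) • L (n + m))
    (hLY : ∀ n m : ℤ, ⁅L n, Y m⁆ = ((m : ℂ) + (n : ℂ) / 2) • Y (n + m))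
    (hYY : ∀ n m : ℤ, ⁅Y n, Y m⁆ = ((m : ℂ) - (n : ℂ)) • M (n + m))
    (hLM : ∀ n m : ℤ, ⁅L n, M m⁆ = ((m : ℂ) + 2 * (n : ℂ)) • M (n + m))
    (hYM : ∀ n m : ℤ, ⁅Y n, M m⁆ = 0)
    (hMM : ∀ n m : ℤ, ⁅M n, M m⁆ = 0)
    (D : 𝓛 →ₗ[ℂ] 𝓛)
    (hDL : ∀ n : ℤ, D (L n) = ((n : ℂ) ^ 3) • M n)
    (hDY : ∀ n : ℤ, D (Y n) = 0)
    (hDM : ∀ n : ℤ, D (M n) = 0) :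
    (∀ x y : 𝓛, D ⁅x, y⁆ = ⁅D x, y⁆ + ⁅x, D y⁆) ∧
      ¬ ∃ z : 𝓛, ∀ x : 𝓛, D x = ⁅z, x⁆ := by
  -- reversed brackets
  have hYL : ∀ n m : ℤ, ⁅Y n, L m⁆ = -(((n : ℂ) + (m : ℂ) / 2) • Y (m + n)) := by
    intro n m; rw [← lie_skew, hLY]
  have hML : ∀ n m : ℤ, ⁅M n, L m⁆ = -(((n : ℂ) + 2 * (m : ℂ)) • M (m + n)) := by
    intro n m; rw [← lie_skew, hLM]
  have hMY : ∀ n m : ℤ, ⁅M n, Y m⁆ = 0 := by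
    intro n m; rw [← lie_skew, hYM, neg_zero]
  have hderiv : ∀ x y : 𝓛, D ⁅x, y⁆ = ⁅D x, y⁆ + ⁅x, D y⁆ := by
    have hb : ∀ x ∈ Set.range L ∪ Set.range Y ∪ Set.range M,
        ∀ y ∈ Set.range L ∪ Set.range Y ∪ Set.range M,
        D ⁅x, y⁆ = ⁅D x, y⁆ + ⁅x, D y⁆ := by
      rintro x ((⟨n, rfl⟩ | ⟨n, rfl⟩) | ⟨n, rfl⟩) y ((⟨m, rfl⟩ | ⟨m, rfl⟩) | ⟨m, rfl⟩) <;>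
        simp only [hLL, hLY, hYY, hLM, hYM, hMM, hYL, hML, hMY, map_smul, map_zero, map_neg,
          hDL, hDY, hDM, lie_smul, smul_lie, lie_zero, zero_lie, smul_zero, neg_zero,
          add_zero, zero_add, smul_neg, neg_smul] <;>
        first
        | rfl
        | (rw [show m + n = n + m from add_comm m n]; match_scalars <;> push_cast <;> ring)
        | (match_scalars <;> push_cast <;> ring)
    intro x y
    have hx : x ∈ Submodule.span ℂ (Set.range L ∪ Set.range Y ∪ Set.range M) := by
      rw [hspan]; trivial
    have hy : y ∈ Submodule.span ℂ (Set.range L ∪ Set.range Y ∪ Set.range M) := by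
      rw [hspan]; trivial
    induction hx using Submodule.span_induction with
    | mem u hu =>
      induction hy using Submodule.span_induction with
      | mem v hv => exact hb u hu v hv
      | zero => simp
      | add a b _ _ ha hb' => simp only [lie_add, map_add, ha, hb']; abel
      | smul c a _ ha => simp only [lie_smul, map_smul, ha, smul_add]
    | zero => simp
    | add a b _ _ ha hb' => simp only [add_lie, map_add, ha, hb']; abel
    | smul c a _ ha => simp only [smul_lie, map_smul, ha, smul_add]
  refine ⟨hderiv, ?_⟩
  rintro ⟨z, hz⟩
  -- build the basis
  set v : ℤ × Fin 3 → 𝓛 :=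
    (fun p : ℤ × Fin 3 => if p.2 = 0 then L p.1 else if p.2 = 1 then Y p.1 else M p.1) with hv
  have hrange : Set.range v = Set.range L ∪ Set.range Y ∪ Set.range M := by
    ext x
    constructor
    · rintro ⟨⟨n, i⟩, rfl⟩
      fin_cases i
      · exact Or.inl (Or.inl ⟨n, rfl⟩)
      · refine Or.inl (Or.inr ⟨n, ?_⟩); simp [hv]
      · refine Or.inr ⟨n, ?_⟩; simp [hv]
    · rintro ((⟨n, rfl⟩ | ⟨n, rfl⟩) | ⟨n, rfl⟩)
      · exact ⟨(n, 0), rfl⟩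
      · exact ⟨(n, 1), by simp [hv]⟩
      · exact ⟨(n, 2), by simp [hv]⟩
  obtain ⟨B, hB⟩ : ∃ B : Module.Basis (ℤ × Fin 3) ℂ 𝓛, ∀ p, B p = v p := by
    refine ⟨Module.Basis.mk hind ?_, fun p => Module.Basis.mk_apply _ _ _⟩
    rw [show (Set.range fun p : ℤ × Fin 3 =>
        if p.2 = 0 then L p.1 else if p.2 = 1 then Y p.1 else M p.1) = Set.range v from rfl,
      hrange, hspan]
  have hBL : ∀ n : ℤ, B (n, 0) = L n := fun n => hB (n, 0)
  have hBY : ∀ n : ℤ, B (n, 1) = Y n := fun n => by rw [hB (n, 1)]; simp [hv]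
  have hBM : ∀ n : ℤ, B (n, 2) = M n := fun n => by rw [hB (n, 2)]; simp [hv]
  -- coordinate functionals
  set f : 𝓛 →ₗ[ℂ] ℂ :=
    (Finsupp.lapply ((0 : ℤ), (2 : Fin 3))) ∘ₗ (B.repr : 𝓛 →ₗ[ℂ] (ℤ × Fin 3) →₀ ℂ) with hf
  have key : ∀ (k : ℤ) (x : 𝓛), (B.repr ⁅x, L k⁆) ((k, 2)) = -(2 * k) * f x := by
    intro k
    have : (Finsupp.lapply ((k : ℤ), (2 : Fin 3))) ∘ₗ (B.repr : 𝓛 →ₗ[ℂ] (ℤ × Fin 3) →₀ ℂ) ∘ₗ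
        rbracket ℂ 𝓛 (L k) = (-(2 * (k : ℂ))) • f := by
      apply B.ext
      rintro ⟨n, i⟩
      fin_cases i <;>
        simp only [Fin.zero_eta, Fin.mk_one, Fin.isValue, Fin.reduceFinMk]
      · -- L n
        rw [hBL]
        simp only [LinearMap.comp_apply, rbracket_apply, LinearMap.smul_apply, hf,
          Finsupp.lapply_apply, LinearMap.coe_coe]
        rw [← lie_skew, hLL, map_neg, map_smul, ← hBL (k + n), ← hBL n]
        simp [B.repr_self, Finsupp.single_apply]
      · -- Y n
        rw [hBY]
        simp only [LinearMap.comp_apply, rbracket_apply, LinearMap.smul_apply, hf,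
          Finsupp.lapply_apply, LinearMap.coe_coe]
        rw [hYL, map_neg, map_smul, ← hBY (k + n), ← hBY n]
        simp [B.repr_self, Finsupp.single_apply]
      · -- M n
        rw [hBM]
        simp only [LinearMap.comp_apply, rbracket_apply, LinearMap.smul_apply, hf,
          Finsupp.lapply_apply, LinearMap.coe_coe]
        rw [hML, map_neg, map_smul, ← hBM (k + n), ← hBM n]
        rcases eq_or_ne n 0 with rfl | hn
        · simp [B.repr_self, Finsupp.single_apply]
          try push_cast
          try ring
        · have h1 : ((k + n : ℤ), (2 : Fin 3)) ≠ ((k : ℤ), (2 : Fin 3)) := by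
            simp only [ne_eq, Prod.mk.injEq, not_and]
            intro hkn
            omega
          have h2 : ((n : ℤ), (2 : Fin 3)) ≠ ((0 : ℤ), (2 : Fin 3)) := by
            simp [Prod.ext_iff, hn]
          simp [B.repr_self, Finsupp.single_apply, h1, h2]
    intro x
    have := congrFun (congrArg (fun φ : 𝓛 →ₗ[ℂ] ℂ => (φ : 𝓛 → ℂ)) this) x
    simpa using this
  -- evaluate at z
  have e1 : (B.repr ⁅z, L 1⁆) ((1 : ℤ), (2 : Fin 3)) = 1 := by
    rw [← hz, hDL, ← hBM 1]
    simp [B.repr_self]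
  have e2 : (B.repr ⁅z, L 2⁆) ((2 : ℤ), (2 : Fin 3)) = 8 := by
    rw [← hz, hDL, ← hBM 2, map_smul]
    simp [B.repr_self]
    norm_num
  have k1 := key 1 z
  have k2 := key 2 z
  rw [e1] at k1
  rw [e2] at k2
  -- k1 : 1 = -2 * f z, k2 : 8 = -4 * f z
  push_cast at k1 k2
  have : (12 : ℂ) = 0 := by linear_combination -4 * k1 + 2 * k2
  norm_num at this
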